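/- arXiv:1908.02253 — 2 statements merged into one kernel-verified Lean document; each statement's English description precedes it below -/
import Mathlib

section
/- (Claim 11) Let k ≥ 2 and n ≥ 3 be integers, let A ⊆ [k]^n be a compressed set, set D = A ∩ B_0, and suppose x ∈ D and y = x⁺ ∈ D, where x⁺ denotes the immediate successor of x in the ≤-order on [k]^n. Then: (1) there exists a unique index i with y_i > x_i; (2) for every index j, y_j < x_j implies y_j = 1; (3) if y_j ≠ 1 for all j, then y_j > x_i for all j, where i is the unique index from (1). -/
open Finset
open scoped Classical

/-- `R_i(x)`: the set of coordinates of `x` equal to `i`.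
The ambient alphabet is `[k+1] = {0,…,k}`. -/
noncomputable def rset {k N : ℕ} (x : Fin N → Fin (k + 1)) (i : ℕ) : Finset (Fin N) :=
  Finset.univ.filter fun j => (x j : ℕ) = i

/-- the strict binary order on finite sets of coordinates:
`X <_bin Y` iff `X ≠ Y` and `max (X Δ Y) ∈ Y`. -/
def binLT {N : ℕ} (X Y : Finset (Fin N)) : Prop :=
  ∃ m ∈ Y, m ∉ X ∧ ∀ j : Fin N, ((j ∈ X ∧ j ∉ Y) ∨ (j ∈ Y ∧ j ∉ X)) → j ≤ m

/-- the strict `≤`-order on `[k+1]^N`: `x < y` iff `|R_0(x)| > |R_0(y)|`, or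
`|R_0(x)| = |R_0(y)|` and for the largest `i` with `R_i(x) ≠ R_i(y)` we have
`max (R_i(x) Δ R_i(y)) ∈ R_i(y)`. -/
def plt {k N : ℕ} (x y : Fin N → Fin (k + 1)) : Prop :=
  (rset y 0).card < (rset x 0).card ∨
    ((rset x 0).card = (rset y 0).card ∧
      ∃ i : ℕ, binLT (rset x i) (rset y i) ∧ ∀ j : ℕ, i < j → rset x j = rset y j)

/-- the `≤`-order on `[k+1]^N`. -/
def ple {k N : ℕ} (x y : Fin N → Fin (k + 1)) : Prop := x = y ∨ plt x y

/-- `B` is an initial segment of the `≤`-order. -/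
def isInitSeg {k N : ℕ} (B : Finset (Fin N → Fin (k + 1))) : Prop :=
  ∀ y ∈ B, ∀ x, ple x y → x ∈ B

/-- the `d`-shadow: all points obtained from a point of `A` by flipping one
nonzero coordinate to `0`. -/
noncomputable def dShadow {k N : ℕ} (A : Finset (Fin N → Fin (k + 1))) :
    Finset (Fin N → Fin (k + 1)) :=
  A.biUnion fun x =>
    (Finset.univ.filter fun i => x i ≠ 0).image fun i => Function.update x i 0

/-- the initial segment of the `≤`-order on `[k+1]^N` of cardinality `m`. -/
noncomputable def initSeg (k N m : ℕ) : Finset (Fin N → Fin (k + 1)) :=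
  Finset.univ.filter fun x => (Finset.univ.filter fun y => ple y x).card ≤ m

/-- the `C_s`-compression of `A ⊆ [k+1]^(n+1)`: replace each slice
`A_{s,t} = {y : t_s y ∈ A}` by the initial segment of the same size. -/
noncomputable def compress {k n : ℕ} (s : Fin (n + 1)) (A : Finset (Fin (n + 1) → Fin (k + 1))) :
    Finset (Fin (n + 1) → Fin (k + 1)) :=
  Finset.univ.biUnion fun t : Fin (k + 1) =>
    (initSeg k n
        (Finset.univ.filter fun y : Fin n → Fin (k + 1) => s.insertNth t y ∈ A).card).image
      fun y => s.insertNth t y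

/-- `A` is compressed if every `C_s`-compression fixes it. -/
def IsCompressed {k n : ℕ} (A : Finset (Fin (n + 1) → Fin (k + 1))) : Prop :=
  ∀ s : Fin (n + 1), compress s A = A

/-- `B_r`: points with exactly `r` zero coordinates. -/
noncomputable def Bexact (k N r : ℕ) : Finset (Fin N → Fin (k + 1)) :=
  Finset.univ.filter fun x => (rset x 0).card = r

/-- `B_{≥r}`: points with at least `r` zero coordinates. -/
noncomputable def Bge (k N r : ℕ) : Finset (Fin N → Fin (k + 1)) :=
  Finset.univ.filter fun x => r ≤ (rset x 0).card

/-- `m(x)`: the largest coordinate value of `x`. -/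
noncomputable def mval {k N : ℕ} (x : Fin N → Fin (k + 1)) : ℕ :=
  Finset.univ.sup fun i => (x i : ℕ)

/-- the class `C_X`: points with maximal coordinate `s`, attained exactly on `X`,
and exactly `r` zero coordinates. -/
noncomputable def classSet (k N s r : ℕ) (X : Finset (Fin N)) : Finset (Fin N → Fin (k + 1)) :=
  Finset.univ.filter fun x => mval x = s ∧ rset x s = X ∧ (rset x 0).card = r

/-- `[m]^N = {0,…,m−1}^N`. -/
noncomputable def box (k N m : ℕ) : Finset (Fin N → Fin (k + 1)) :=
  Finset.univ.filter fun x => ∀ i, (x i : ℕ) < m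

/-- `{1,…,s−1}^N`. -/
noncomputable def box1 (k N s : ℕ) : Finset (Fin N → Fin (k + 1)) :=
  Finset.univ.filter fun x => ∀ i, 1 ≤ (x i : ℕ) ∧ (x i : ℕ) ≤ s - 1

/-- `B` is a down-set. -/
def isDownSet {k N : ℕ} (B : Finset (Fin N → Fin (k + 1))) : Prop :=
  ∀ y ∈ B, ∀ x : Fin N → Fin (k + 1), (∀ j, (x j : ℕ) ≤ (y j : ℕ)) → x ∈ B

section Aux

lemma mem_rset {k N : ℕ} {x : Fin N → Fin (k + 1)} {i : ℕ} {j : Fin N} :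
    j ∈ rset x i ↔ (x j : ℕ) = i := by simp [rset]

lemma rset_zero {k N : ℕ} {x : Fin N → Fin (k + 1)} (h : ∀ j, (x j : ℕ) ≠ 0) :
    rset x 0 = ∅ := by
  ext j; simp [rset, h j]; exact fun h' => h j (by simp [h'])

/-- The pivot characterization of `plt` on zero-free points. -/
lemma plt_iff_pivot {k N : ℕ} (x y : Fin N → Fin (k + 1))
    (hx : ∀ j, (x j : ℕ) ≠ 0) (hy : ∀ j, (y j : ℕ) ≠ 0) :
    plt x y ↔ ∃ p : Fin N, (x p : ℕ) < (y p : ℕ) ∧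
      ∀ j : Fin N, j ≠ p → (x j : ℕ) ≠ (y j : ℕ) →
        N * max (x j : ℕ) (y j : ℕ) + (j : ℕ) < N * max (x p : ℕ) (y p : ℕ) + (p : ℕ) := by
  constructor
  · rintro (hlt | ⟨-, i, ⟨m, hmY, hmX, hmax⟩, hgt⟩)
    · rw [rset_zero hx, rset_zero hy] at hlt; simp at hlt
    · rw [mem_rset] at hmY
      rw [mem_rset] at hmX
      have key : ∀ j : Fin N, (x j : ℕ) ≠ (y j : ℕ) → (x j : ℕ) ≤ i ∧ (y j : ℕ) ≤ i := by
        intro j hne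
        constructor
        · by_contra h
          have h1 := hgt (x j : ℕ) (by omega)
          have hj : j ∈ rset x (x j : ℕ) := mem_rset.2 rfl
          rw [h1, mem_rset] at hj; omega
        · by_contra h
          have h1 := hgt (y j : ℕ) (by omega)
          have hj : j ∈ rset y (y j : ℕ) := mem_rset.2 rfl
          rw [← h1, mem_rset] at hj; omega
      have hxm : (x m : ℕ) < i := by
        rcases Nat.lt_or_ge (x m : ℕ) i with h | h
        · exact h
        · have hne : (x m : ℕ) ≠ (y m : ℕ) := by omega
          have := (key m hne).1; omega
      refine ⟨m, by omega, ?_⟩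
      intro j hjm hne
      have hj := key j hne
      have hmax' : max (x m : ℕ) (y m : ℕ) = i := by omega
      rw [hmax']
      rcases Nat.lt_or_ge (max (x j : ℕ) (y j : ℕ)) i with h | h
      · have hjN : (j : ℕ) < N := j.isLt
        have h1 : N * (max (x j : ℕ) (y j : ℕ) + 1) ≤ N * i := Nat.mul_le_mul_left N (by omega)
        have h2 : N * (max (x j : ℕ) (y j : ℕ) + 1)
            = N * max (x j : ℕ) (y j : ℕ) + N := by ring
        linarith
      · have hone : (x j : ℕ) = i ∨ (y j : ℕ) = i := by omega
        have hjm' : j ≤ m := hmax j (by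
          rcases hone with h' | h'
          · exact Or.inl ⟨mem_rset.2 h', by rw [mem_rset]; omega⟩
          · exact Or.inr ⟨mem_rset.2 h', by rw [mem_rset]; omega⟩)
        have hjv : (j : ℕ) ≤ (m : ℕ) := hjm'
        have hjv' : (j : ℕ) ≠ (m : ℕ) := fun h' => hjm (Fin.val_injective h')
        have hmaxj : max (x j : ℕ) (y j : ℕ) = i := by omega
        rw [hmaxj]
        exact Nat.add_lt_add_left (by omega) _
  · rintro ⟨p, hp, hkey⟩
    right
    refine ⟨by rw [rset_zero hx, rset_zero hy], (y p : ℕ), ?_, ?_⟩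
    · refine ⟨p, mem_rset.2 rfl, by rw [mem_rset]; omega, ?_⟩
      intro j hj
      have hcase : ((x j : ℕ) = (y p : ℕ) ∧ (y j : ℕ) ≠ (y p : ℕ)) ∨
          ((y j : ℕ) = (y p : ℕ) ∧ (x j : ℕ) ≠ (y p : ℕ)) := by
        rcases hj with ⟨h1, h2⟩ | ⟨h1, h2⟩ <;> rw [mem_rset] at h1 <;>
          rw [mem_rset] at h2 <;> [exact Or.inl ⟨h1, h2⟩; exact Or.inr ⟨h1, h2⟩]
      by_cases hjp : j = p
      · exact le_of_eq hjp
      · have hne : (x j : ℕ) ≠ (y j : ℕ) := by omega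
        have hk := hkey j hjp hne
        have hmx : (y p : ℕ) ≤ max (x j : ℕ) (y j : ℕ) := by omega
        have hmp : max (x p : ℕ) (y p : ℕ) = (y p : ℕ) := by omega
        rw [hmp] at hk
        have h1 := Nat.mul_le_mul_left N hmx
        have h2 : (j : ℕ) < (p : ℕ) := by linarith
        exact le_of_lt (Fin.lt_def.2 h2)
    · intro i' hi'
      ext j
      rw [mem_rset, mem_rset]
      by_cases hjp : j = p
      · subst hjp; constructor <;> intro h <;> omega
      · by_cases hne : (x j : ℕ) = (y j : ℕ)
        · rw [hne]
        · have hk := hkey j hjp hne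
          have hmp : max (x p : ℕ) (y p : ℕ) = (y p : ℕ) := by omega
          rw [hmp] at hk
          have hmaxle : max (x j : ℕ) (y j : ℕ) ≤ (y p : ℕ) := by
            by_contra h
            have h1 : N * ((y p : ℕ) + 1) ≤ N * max (x j : ℕ) (y j : ℕ) :=
              Nat.mul_le_mul_left N (by omega)
            have h2 : N * ((y p : ℕ) + 1) = N * (y p : ℕ) + N := by ring
            have h3 := p.isLt
            linarith
          constructor <;> intro h <;> omega

/-- a point strictly between `x` and its successor `y` gives a contradiction. -/
lemma not_middle {k N : ℕ} {x y z : Fin N → Fin (k + 1)}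
    (hx0 : ∀ j, (x j : ℕ) ≠ 0) (hy0 : ∀ j, (y j : ℕ) ≠ 0) (hz0 : ∀ j, (z j : ℕ) ≠ 0)
    (hsucc : ∀ w, plt x w → ple y w) (hxz : plt x z) (hzy : plt z y) : False := by
  rcases hsucc z hxz with h | h
  · rw [← h] at hzy
    obtain ⟨p, hp, -⟩ := (plt_iff_pivot y y hy0 hy0).1 hzy
    omega
  · obtain ⟨p, hp, hkp⟩ := (plt_iff_pivot y z hy0 hz0).1 h
    obtain ⟨q, hq, hkq⟩ := (plt_iff_pivot z y hz0 hy0).1 hzy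
    have hpq : p ≠ q := by
      intro he; subst he; omega
    have h1 := hkp q (Ne.symm hpq) (by omega)
    have h2 := hkq p hpq (by omega)
    rw [Nat.max_comm (z q : ℕ) (y q : ℕ), Nat.max_comm (z p : ℕ) (y p : ℕ)] at h2
    linarith

lemma plt_update {k N : ℕ} (y : Fin N → Fin (k + 1)) (q : Fin N) (v : Fin (k + 1))
    (hv : (v : ℕ) < (y q : ℕ)) (hv0 : (v : ℕ) ≠ 0) (hy : ∀ j, (y j : ℕ) ≠ 0) :
    plt (Function.update y q v) y := by
  have hz0 : ∀ j, ((Function.update y q v j : Fin (k + 1)) : ℕ) ≠ 0 := by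
    intro j
    by_cases h : j = q
    · subst h; simpa using hv0
    · simpa [Function.update_of_ne h] using hy j
  rw [plt_iff_pivot _ _ hz0 hy]
  refine ⟨q, by simpa using hv, ?_⟩
  intro j hjq hne
  exact absurd (by simp [Function.update_of_ne hjq]) hne

end Aux

/-- **Claim 11.** Let `k ≥ 2`, `n ≥ 3`, let `A ⊆ [k]^n` be compressed, `D = A ∩ B_0`,
and suppose `x ∈ D` and `y = x⁺ ∈ D` (the immediate successor in the `≤`-order). Then
(1) there is a unique `i` with `y_i > x_i`; (2) `y_j < x_j` implies `y_j = 1`;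
(3) if `y_j ≠ 1` for all `j`, then `y_j > x_i` for all `j`, where `i` is the unique
index from (1). (Dimension `n ≥ 3` is rendered as `n + 1` with `n ≥ 2`;
alphabet `[k]` with `k ≥ 2` as `Fin (k+1)` with `k ≥ 1`.) -/
theorem claim11 (k n : ℕ) (hk : 1 ≤ k) (hn : 2 ≤ n)
    (A : Finset (Fin (n + 1) → Fin (k + 1))) (hA : IsCompressed A)
    (x y : Fin (n + 1) → Fin (k + 1))
    (hx : x ∈ A ∩ Bexact k (n + 1) 0) (hy : y ∈ A ∩ Bexact k (n + 1) 0)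
    (hsucc : plt x y ∧ ∀ z : Fin (n + 1) → Fin (k + 1), plt x z → ple y z) :
    (∃! i : Fin (n + 1), (x i : ℕ) < (y i : ℕ)) ∧
    (∀ j : Fin (n + 1), (y j : ℕ) < (x j : ℕ) → (y j : ℕ) = 1) ∧
    ((∀ j : Fin (n + 1), (y j : ℕ) ≠ 1) →
      ∀ i : Fin (n + 1), (x i : ℕ) < (y i : ℕ) →
        ∀ j : Fin (n + 1), (x i : ℕ) < (y j : ℕ)) := by
  have hx0 : ∀ j, (x j : ℕ) ≠ 0 := by
    intro j hj
    have h := (Finset.mem_inter.1 hx).2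
    rw [Bexact, Finset.mem_filter] at h
    have hmem : j ∈ rset x 0 := mem_rset.2 hj
    rw [Finset.card_eq_zero.1 h.2] at hmem
    exact absurd hmem (Finset.notMem_empty j)
  have hy0 : ∀ j, (y j : ℕ) ≠ 0 := by
    intro j hj
    have h := (Finset.mem_inter.1 hy).2
    rw [Bexact, Finset.mem_filter] at h
    have hmem : j ∈ rset y 0 := mem_rset.2 hj
    rw [Finset.card_eq_zero.1 h.2] at hmem
    exact absurd hmem (Finset.notMem_empty j)
  obtain ⟨p, hp, hkey⟩ := (plt_iff_pivot x y hx0 hy0).1 hsucc.1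
  -- uniqueness of the increasing index
  have huniq : ∀ i : Fin (n + 1), (x i : ℕ) < (y i : ℕ) → i = p := by
    intro i hi
    by_contra hip
    obtain ⟨z, hz⟩ : ∃ z, z = Function.update y i (x i) := ⟨_, rfl⟩
    have hz0 : ∀ j, (z j : ℕ) ≠ 0 := by
      intro j
      by_cases h : j = i
      · rw [hz, h, Function.update_self]; exact hx0 i
      · rw [hz, Function.update_of_ne h]; exact hy0 j
    have hzy : plt z y := hz ▸ plt_update y i (x i) hi (hx0 i) hy0
    have hzpe : (z p : ℕ) = (y p : ℕ) := by
      rw [hz, Function.update_of_ne (Ne.symm hip)]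
    have hxz : plt x z := by
      rw [plt_iff_pivot x z hx0 hz0]
      refine ⟨p, by omega, ?_⟩
      intro j hjp hne
      by_cases hji : j = i
      · exact absurd (by rw [hji, hz, Function.update_self]) (Ne.symm hne)
      · have hzj : (z j : ℕ) = (y j : ℕ) := by rw [hz, Function.update_of_ne hji]
        rw [hzj, hzpe]
        exact hkey j hjp (by omega)
    exact not_middle hx0 hy0 hz0 hsucc.2 hxz hzy
  -- part (2)
  have h2 : ∀ j : Fin (n + 1), (y j : ℕ) < (x j : ℕ) → (y j : ℕ) = 1 := by
    intro j hj
    by_contra hj1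
    have hyj : 2 ≤ (y j : ℕ) := by have := hy0 j; omega
    have hjp : j ≠ p := by intro h; rw [h] at hj; omega
    have hsb : (y j : ℕ) - 1 < k + 1 := by have := (y j).isLt; omega
    have hv0 : ((⟨(y j : ℕ) - 1, hsb⟩ : Fin (k + 1)) : ℕ) = (y j : ℕ) - 1 := rfl
    obtain ⟨z, hz⟩ : ∃ z, z = Function.update y j (⟨(y j : ℕ) - 1, hsb⟩ : Fin (k + 1)) :=
      ⟨_, rfl⟩
    have hz0 : ∀ j' , (z j' : ℕ) ≠ 0 := by
      intro j'
      by_cases h : j' = j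
      · rw [hz, h, Function.update_self, hv0]; omega
      · rw [hz, Function.update_of_ne h]; exact hy0 j'
    have hzy : plt z y := hz ▸ plt_update y j _ (by rw [hv0]; omega) (by rw [hv0]; omega) hy0
    have hzpe : (z p : ℕ) = (y p : ℕ) := by
      rw [hz, Function.update_of_ne (Ne.symm hjp)]
    have hzje : (z j : ℕ) = (y j : ℕ) - 1 := by
      rw [hz, Function.update_self, hv0]
    have hxz : plt x z := by
      rw [plt_iff_pivot x z hx0 hz0]
      refine ⟨p, by omega, ?_⟩
      intro j' hj'p hne
      by_cases hj'j : j' = j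
      · subst hj'j
        have e1 : max (x j' : ℕ) (z j' : ℕ) = max (x j' : ℕ) (y j' : ℕ) := by omega
        have e2 : max (x p : ℕ) (z p : ℕ) = max (x p : ℕ) (y p : ℕ) := by omega
        rw [e1, e2]
        exact hkey j' hj'p (by omega)
      · have hzj' : (z j' : ℕ) = (y j' : ℕ) := by rw [hz, Function.update_of_ne hj'j]
        have e2 : max (x p : ℕ) (z p : ℕ) = max (x p : ℕ) (y p : ℕ) := by omega
        rw [hzj', e2]
        exact hkey j' hj'p (by omega)
    exact not_middle hx0 hy0 hz0 hsucc.2 hxz hzy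
  -- part (3)
  have h3 : (∀ j : Fin (n + 1), (y j : ℕ) ≠ 1) → ∀ j : Fin (n + 1), (x p : ℕ) < (y j : ℕ) := by
    intro hall j
    by_contra h
    push_neg at h
    have hjp : j ≠ p := by intro he; rw [he] at h; omega
    have hxyj : (x j : ℕ) ≤ (y j : ℕ) := by
      by_contra h'
      exact hall j (h2 j (by omega))
    have hyj2 : 2 ≤ (y j : ℕ) := by have := hy0 j; have := hall j; omega
    have h1k : (1 : ℕ) < k + 1 := by omega
    have hv0 : ((⟨1, h1k⟩ : Fin (k + 1)) : ℕ) = 1 := rfl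
    obtain ⟨z, hz⟩ : ∃ z, z = Function.update y j (⟨1, h1k⟩ : Fin (k + 1)) := ⟨_, rfl⟩
    have hz0 : ∀ j', (z j' : ℕ) ≠ 0 := by
      intro j'
      by_cases hc : j' = j
      · rw [hz, hc, Function.update_self, hv0]; omega
      · rw [hz, Function.update_of_ne hc]; exact hy0 j'
    have hzy : plt z y := hz ▸ plt_update y j _ (by rw [hv0]; omega) (by rw [hv0]; omega) hy0
    have hzpe : (z p : ℕ) = (y p : ℕ) := by
      rw [hz, Function.update_of_ne (Ne.symm hjp)]
    have hzje : (z j : ℕ) = 1 := by rw [hz, Function.update_self, hv0]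
    have hxz : plt x z := by
      rw [plt_iff_pivot x z hx0 hz0]
      refine ⟨p, by omega, ?_⟩
      intro j' hj'p hne
      by_cases hj'j : j' = j
      · subst hj'j
        have e1 : max (x j' : ℕ) (z j' : ℕ) = (x j' : ℕ) := by
          have := hx0 j'; omega
        have e2 : max (x p : ℕ) (z p : ℕ) = (y p : ℕ) := by omega
        rw [e1, e2]
        have hle : (x j' : ℕ) + 1 ≤ (y p : ℕ) := by omega
        have hmul : (n + 1) * ((x j' : ℕ) + 1) ≤ (n + 1) * (y p : ℕ) := Nat.mul_le_mul_left (n + 1) hle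
        have hmul2 : (n + 1) * ((x j' : ℕ) + 1) = (n + 1) * (x j' : ℕ) + (n + 1) := by ring
        have hjN : (j' : ℕ) < n + 1 := j'.isLt
        linarith
      · have hzj' : (z j' : ℕ) = (y j' : ℕ) := by rw [hz, Function.update_of_ne hj'j]
        have e2 : max (x p : ℕ) (z p : ℕ) = max (x p : ℕ) (y p : ℕ) := by omega
        rw [hzj', e2]
        exact hkey j' hj'p (by omega)
    exact not_middle hx0 hy0 hz0 hsucc.2 hxz hzy
  refine ⟨⟨p, hp, huniq⟩, h2, ?_⟩
  intro hall i hi j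
  have := h3 hall j
  rw [huniq i hi]
  exact this
end

section
/- (Claim 14, first part) Let n ≥ 3 and 2 ≤ s ≤ k−1 be integers, and let A ⊆ [k]^n be a compressed set with B_{≥1} ∪ ([s]^n ∩ B_0) ⊊ A ⊆ B_{≥1} ∪ ([s+1]^n ∩ B_0), where [m]^n = {0,…,m−1}^n. For a nonempty X ⊆ {1,…,n} let C_X = {x ∈ [k]^n : m(x) = s, R_s(x) = X, R_0(x) = ∅}, and let T be the largest nonempty subset of {1,…,n} under the binary order with C_T ∩ A ≠ ∅. If |T| ≥ 2, then for every nonempty S ⊆ {1,…,n} with S <_bin T we have C_S ⊆ A. -/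
open Finset
open scoped Classical

lemma binLT_trans {N : ℕ} {X Y Z : Finset (Fin N)} (h1 : binLT X Y) (h2 : binLT Y Z) :
    binLT X Z := by
  obtain ⟨m1, hm1Y, hm1X, hb1⟩ := h1
  obtain ⟨m2, hm2Z, hm2Y, hb2⟩ := h2
  rcases lt_trichotomy m1 m2 with h | h | h
  · refine ⟨m2, hm2Z, ?_, ?_⟩
    · intro hm2X
      exact absurd (hb1 m2 (Or.inl ⟨hm2X, hm2Y⟩)) (not_le.mpr h)
    · intro j hj
      by_cases hjY : j ∈ Y
      · rcases hj with ⟨hjX, hjZ⟩ | ⟨hjZ, hjX⟩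
        · exact hb2 j (Or.inl ⟨hjY, hjZ⟩)
        · exact le_trans (hb1 j (Or.inr ⟨hjY, hjX⟩)) h.le
      · rcases hj with ⟨hjX, hjZ⟩ | ⟨hjZ, hjX⟩
        · exact le_trans (hb1 j (Or.inl ⟨hjX, hjY⟩)) h.le
        · exact hb2 j (Or.inr ⟨hjZ, hjY⟩)
  · exact absurd (h ▸ hm1Y) hm2Y
  · refine ⟨m1, ?_, hm1X, ?_⟩
    · by_contra hm1Z
      exact absurd (hb2 m1 (Or.inl ⟨hm1Y, hm1Z⟩)) (not_le.mpr h)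
    · intro j hj
      by_cases hjY : j ∈ Y
      · rcases hj with ⟨hjX, hjZ⟩ | ⟨hjZ, hjX⟩
        · exact le_trans (hb2 j (Or.inl ⟨hjY, hjZ⟩)) h.le
        · exact hb1 j (Or.inr ⟨hjY, hjX⟩)
      · rcases hj with ⟨hjX, hjZ⟩ | ⟨hjZ, hjX⟩
        · exact hb1 j (Or.inl ⟨hjX, hjY⟩)
        · exact le_trans (hb2 j (Or.inr ⟨hjZ, hjY⟩)) h.le

lemma plt_trans {k N : ℕ} {a b c : Fin N → Fin (k + 1)} (h1 : plt a b) (h2 : plt b c) :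
    plt a c := by
  rcases h1 with h1 | ⟨hc1, i1, hb1, he1⟩
  · rcases h2 with h2 | ⟨hc2, i2, hb2, he2⟩
    · exact Or.inl (h2.trans h1)
    · exact Or.inl (hc2 ▸ h1)
  · rcases h2 with h2 | ⟨hc2, i2, hb2, he2⟩
    · exact Or.inl (lt_of_lt_of_eq h2 hc1.symm)
    · refine Or.inr ⟨hc1.trans hc2, ?_⟩
      rcases lt_trichotomy i1 i2 with h | h | h
      · refine ⟨i2, ?_, ?_⟩
        · rw [he1 i2 h]; exact hb2
        · intro j hj
          rw [he1 j (h.trans hj)]; exact he2 j hj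
      · subst h
        exact ⟨i1, binLT_trans hb1 hb2, fun j hj => (he1 j hj).trans (he2 j hj)⟩
      · refine ⟨i1, ?_, ?_⟩
        · rw [← he2 i1 h]; exact hb1
        · intro j hj
          rw [he1 j hj]; exact he2 j (h.trans hj)

lemma plt_delete {k n : ℕ} (j : Fin (n + 1)) (z x : Fin (n + 1) → Fin (k + 1)) (i : ℕ)
    (hj : z j = x j)
    (h0z : ∀ a, (z a : ℕ) ≠ 0) (h0x : ∀ a, (x a : ℕ) ≠ 0)
    (hlez : ∀ a, (z a : ℕ) ≤ i) (hlex : ∀ a, (x a : ℕ) ≤ i)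
    (hb : binLT (rset z i) (rset x i)) :
    plt (z ∘ j.succAbove) (x ∘ j.succAbove) := by
  refine Or.inr ⟨?_, i, ?_, ?_⟩
  · have h1 : rset (z ∘ j.succAbove) 0 = ∅ := by
      simp only [rset, Function.comp, Finset.filter_eq_empty_iff]
      intro a _; exact h0z _
    have h2 : rset (x ∘ j.succAbove) 0 = ∅ := by
      simp only [rset, Function.comp, Finset.filter_eq_empty_iff]
      intro a _; exact h0x _
    rw [h1, h2]
  · obtain ⟨m, hmx, hmz, hbd⟩ := hb
    have hmemx : (x m : ℕ) = i := by
      simpa [rset] using hmx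
    have hmemz : ¬ (z m : ℕ) = i := by
      simpa [rset] using hmz
    have hmj : m ≠ j := by
      intro h; subst h
      rw [hj] at hmemz; exact hmemz hmemx
    obtain ⟨m₀, hm₀⟩ := Fin.exists_succAbove_eq hmj
    refine ⟨m₀, ?_, ?_, ?_⟩
    · simp only [rset, Function.comp, Finset.mem_filter, Finset.mem_univ, true_and]
      rw [hm₀]; exact hmemx
    · simp only [rset, Function.comp, Finset.mem_filter, Finset.mem_univ, true_and]
      rw [hm₀]; exact hmemz
    · intro a ha
      have ha' : (j.succAbove a ∈ rset z i ∧ j.succAbove a ∉ rset x i) ∨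
          (j.succAbove a ∈ rset x i ∧ j.succAbove a ∉ rset z i) := by
        simpa [rset, Function.comp] using ha
      have hle : j.succAbove a ≤ m := hbd _ ha'
      rw [← hm₀] at hle
      exact (Fin.strictMono_succAbove j).le_iff_le.mp hle
  · intro i' hi'
    ext a
    simp only [rset, Function.comp, Finset.mem_filter, Finset.mem_univ, true_and]
    have h1 := hlez (j.succAbove a)
    have h2 := hlex (j.succAbove a)
    constructor <;> intro h <;> omega

lemma lemB {k n : ℕ} {A : Finset (Fin (n + 1) → Fin (k + 1))} (hA : IsCompressed A)
    {j : Fin (n + 1)} {x z : Fin (n + 1) → Fin (k + 1)} (hx : x ∈ A) (hj : z j = x j)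
    (hplt : plt (z ∘ j.succAbove) (x ∘ j.succAbove)) : z ∈ A := by
  have hc := hA j
  rw [← hc] at hx ⊢
  simp only [compress, Finset.mem_biUnion, Finset.mem_image, Finset.mem_univ, true_and] at hx ⊢
  obtain ⟨t, y, hy, hxy⟩ := hx
  have ht : t = x j := by rw [← hxy, Fin.insertNth_apply_same]
  have hyx : y = x ∘ j.succAbove := by
    funext a
    simp only [Function.comp_apply, ← hxy, Fin.insertNth_apply_succAbove]
  rw [hyx] at hy
  refine ⟨t, z ∘ j.succAbove, ?_, ?_⟩
  · simp only [initSeg, Finset.mem_filter, Finset.mem_univ, true_and] at hy ⊢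
    refine le_trans (Finset.card_le_card ?_) hy
    intro w hw
    simp only [Finset.mem_filter, Finset.mem_univ, true_and] at hw ⊢
    rcases hw with rfl | hw
    · exact Or.inr hplt
    · exact Or.inr (plt_trans hw hplt)
  · rw [ht, ← hj]
    exact Fin.insertNth_self_removeNth j z

/-- **Claim 14, first part.** Let `n ≥ 3`, `2 ≤ s ≤ k − 1`, and let `A ⊆ [k]^n` be
compressed with `B_{≥1} ∪ ([s]^n ∩ B_0) ⊊ A ⊆ B_{≥1} ∪ ([s+1]^n ∩ B_0)`. Let `T` be the
largest nonempty set under the binary order with `C_T ∩ A ≠ ∅`. If `|T| ≥ 2`, then for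
every nonempty `S` with `S <_bin T` we have `C_S ⊆ A`.
(Dimension `n ≥ 3` is rendered as `n + 1` with `n ≥ 2`; alphabet `[k]` as `Fin (k+1)`,
so `s ≤ k`.) -/
theorem claim14_first (k n s : ℕ) (hn : 2 ≤ n) (hs1 : 2 ≤ s) (hs2 : s ≤ k)
    (A : Finset (Fin (n + 1) → Fin (k + 1))) (hA : IsCompressed A)
    (hlow : Bge k (n + 1) 1 ∪ (box k (n + 1) s ∩ Bexact k (n + 1) 0) ⊂ A)
    (hhigh : A ⊆ Bge k (n + 1) 1 ∪ (box k (n + 1) (s + 1) ∩ Bexact k (n + 1) 0))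
    (T : Finset (Fin (n + 1))) (hTne : T.Nonempty)
    (hT : (classSet k (n + 1) s 0 T ∩ A).Nonempty)
    (hTmax : ∀ S : Finset (Fin (n + 1)), S.Nonempty →
      (classSet k (n + 1) s 0 S ∩ A).Nonempty → S = T ∨ binLT S T)
    (hTcard : 2 ≤ T.card) :
    ∀ S : Finset (Fin (n + 1)), S.Nonempty → binLT S T →
      classSet k (n + 1) s 0 S ⊆ A := by
  classical
  obtain ⟨x, hxmem⟩ := hT
  rw [Finset.mem_inter] at hxmem
  obtain ⟨hxC, hxA⟩ := hxmem
  simp only [classSet, Finset.mem_filter, Finset.mem_univ, true_and] at hxC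
  obtain ⟨hxm, hxs, hx0⟩ := hxC
  have hx0' : ∀ a, (x a : ℕ) ≠ 0 := by
    have : rset x 0 = ∅ := Finset.card_eq_zero.mp hx0
    intro a ha
    have : a ∈ rset x 0 := by
      simp only [rset, Finset.mem_filter, Finset.mem_univ, true_and]; exact ha
    simp_all
  have hxle : ∀ a, (x a : ℕ) ≤ s := by
    intro a
    rw [← hxm]
    exact Finset.le_sup (f := fun i => ((x i : ℕ))) (Finset.mem_univ a)
  intro S hSne hST z hz
  simp only [classSet, Finset.mem_filter, Finset.mem_univ, true_and] at hz
  obtain ⟨hzm, hzs, hz0⟩ := hz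
  have hz0' : ∀ a, (z a : ℕ) ≠ 0 := by
    have : rset z 0 = ∅ := Finset.card_eq_zero.mp hz0
    intro a ha
    have : a ∈ rset z 0 := by
      simp only [rset, Finset.mem_filter, Finset.mem_univ, true_and]; exact ha
    simp_all
  have hzle : ∀ a, (z a : ℕ) ≤ s := by
    intro a
    rw [← hzm]
    exact Finset.le_sup (f := fun i => ((z i : ℕ))) (Finset.mem_univ a)
  have hval : ∀ (v : Fin (n + 1) → Fin (k + 1)) (X : Finset (Fin (n + 1))) (a : Fin (n + 1)),
      rset v s = X → a ∈ X → (v a : ℕ) = s := by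
    intro v X a hX ha
    rw [← hX] at ha
    simpa [rset] using ha
  by_cases hint : ∃ j, j ∈ S ∧ j ∈ T
  · obtain ⟨j, hjS, hjT⟩ := hint
    have hzj : (z j : ℕ) = s := hval z S j hzs hjS
    have hxj : (x j : ℕ) = s := hval x T j hxs hjT
    have hjeq : z j = x j := Fin.val_injective (by rw [hzj, hxj])
    refine lemB hA hxA hjeq (plt_delete j z x s hjeq hz0' hx0' hzle hxle ?_)
    rw [hzs, hxs]; exact hST
  · push_neg at hint
    obtain ⟨m, hmT, hmS, hbd⟩ := hST
    -- pick p ∈ T, p ≠ m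
    have herase : (T.erase m).Nonempty := by
      rw [← Finset.card_pos, Finset.card_erase_of_mem hmT]
      omega
    obtain ⟨p, hp⟩ := herase
    have hpm : p ≠ m := Finset.ne_of_mem_erase hp
    have hpT : p ∈ T := Finset.mem_of_mem_erase hp
    have hpS : p ∉ S := fun h => hint p h hpT
    set U : Finset (Fin (n + 1)) := insert p S with hU
    -- the witness point w of class U
    set w : Fin (n + 1) → Fin (k + 1) :=
      fun a => if a ∈ U then (⟨s, by omega⟩ : Fin (k + 1)) else (⟨1, by omega⟩ : Fin (k + 1))
      with hw
    have hwle : ∀ a, (w a : ℕ) ≤ s := by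
      intro a; by_cases h : a ∈ U <;> simp [hw, h] <;> omega
    have hw0' : ∀ a, (w a : ℕ) ≠ 0 := by
      intro a; by_cases h : a ∈ U <;> simp [hw, h] <;> omega
    have hws : rset w s = U := by
      ext a
      simp only [rset, Finset.mem_filter, Finset.mem_univ, true_and]
      by_cases h : a ∈ U <;> simp [hw, h] <;> omega
    -- step 1: w ∈ A via lemB from x at coordinate p
    have hwp : w p = x p := by
      have h1 : (w p : ℕ) = s := by simp [hw, hU]
      have h2 : (x p : ℕ) = s := hval x T p hxs hpT
      exact Fin.val_injective (by rw [h1, h2])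
    have hUT : binLT U T := by
      refine ⟨m, hmT, ?_, ?_⟩
      · simp only [hU, Finset.mem_insert]
        push_neg
        exact ⟨(Ne.symm hpm), hmS⟩
      · intro j' hj'
        rcases hj' with ⟨hj'U, hj'T⟩ | ⟨hj'T, hj'U⟩
        · rcases Finset.mem_insert.mp hj'U with rfl | hj'S
          · exact absurd hpT hj'T
          · exact hbd j' (Or.inl ⟨hj'S, hj'T⟩)
        · have hj'S : j' ∉ S := fun h => hj'U (Finset.mem_insert_of_mem h)
          exact hbd j' (Or.inr ⟨hj'T, hj'S⟩)
    have hwA : w ∈ A := by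
      refine lemB hA hxA hwp (plt_delete p w x s hwp hw0' hx0' hwle hxle ?_)
      rw [hws, hxs]; exact hUT
    -- step 2: z ∈ A via lemB from w at a coordinate j ∈ S
    obtain ⟨j, hjS⟩ := hSne
    have hzj : (z j : ℕ) = s := hval z S j hzs hjS
    have hwj : z j = w j := by
      have h1 : (w j : ℕ) = s := by
        simp [hw, hU, hjS]
      exact Fin.val_injective (by rw [hzj, h1])
    have hSU : binLT S U := by
      refine ⟨p, Finset.mem_insert_self p S, hpS, ?_⟩
      intro j' hj'
      rcases hj' with ⟨hj'S, hj'U⟩ | ⟨hj'U, hj'S⟩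
      · exact absurd (Finset.mem_insert_of_mem hj'S) hj'U
      · rcases Finset.mem_insert.mp hj'U with rfl | hj'S2
        · exact le_refl _
        · exact absurd hj'S2 hj'S
    refine lemB hA hwA hwj (plt_delete j z w s hwj hz0' hw0' hzle hwle ?_)
    rw [hzs, hws]; exact hSU
end
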